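/- Quasideterminant via inverse: let K be a division ring and A ∈ Mₙ(K) invertible with the (n−1)×(n−1) submatrix A^{nn} (obtained by deleting the last row and column) also invertible. Then the (n,n)-quasideterminant |A|_{nn} := a_{nn} − r·(A^{nn})⁻¹·c satisfies |A|_{nn} = ((A⁻¹)_{nn})⁻¹, where r is the last row of A without its last entry and c is the last column of A without its last entry. -/

import Mathlib

/-- Quasideterminant via the inverse matrix: if `A` is invertible (with two-sided inverse
`A'`) and the submatrix `B` of `A` obtained by deleting the last row and column is
invertible (with two-sided inverse `B'`), then the `(n,n)`-quasideterminant
`|A|_{nn} = a_{nn} − r·B⁻¹·c` equals `((A⁻¹)_{nn})⁻¹`. -/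
theorem quasideterminant_eq_inv_entry_inv {K : Type*} [DivisionRing K] (n : ℕ)
    (A A' : Matrix (Fin (n + 1)) (Fin (n + 1)) K)
    (hA : A * A' = 1) (hA' : A' * A = 1)
    (B' : Matrix (Fin n) (Fin n) K)
    (hB : A.submatrix Fin.castSucc Fin.castSucc * B' = 1)
    (hB' : B' * A.submatrix Fin.castSucc Fin.castSucc = 1) :
    A (Fin.last n) (Fin.last n) -
        dotProduct (fun j : Fin n => A (Fin.last n) (Fin.castSucc j))
          (B'.mulVec fun i : Fin n => A (Fin.castSucc i) (Fin.last n)) =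
      (A' (Fin.last n) (Fin.last n))⁻¹ := by
  set B := A.submatrix Fin.castSucc Fin.castSucc with hBdef
  set α := A' (Fin.last n) (Fin.last n) with hα
  set c : Fin n → K := fun i => A (Fin.castSucc i) (Fin.last n) with hc
  set r : Fin n → K := fun j => A (Fin.last n) (Fin.castSucc j) with hr
  set v : Fin n → K := fun j => A' (Fin.castSucc j) (Fin.last n) with hv
  set d := A (Fin.last n) (Fin.last n) with hd
  -- B.mulVec v = -(c * α) componentwise
  have hBv : B.mulVec v = fun i => -(c i * α) := by
    funext i
    have h := congrFun (congrFun hA (Fin.castSucc i)) (Fin.last n)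
    rw [Matrix.mul_apply, Fin.sum_univ_castSucc] at h
    have hne : (Fin.castSucc i : Fin (n+1)) ≠ Fin.last n := (Fin.castSucc_lt_last i).ne
    rw [Matrix.one_apply_ne hne] at h
    have h' : (∑ j : Fin n, A (Fin.castSucc i) (Fin.castSucc j) * v j) + c i * α = 0 := h
    simp only [Matrix.mulVec, dotProduct, hBdef, Matrix.submatrix_apply]
    exact eq_neg_of_add_eq_zero_left h'
  -- hence v = -(B'.mulVec c) * α componentwise
  have hveq : ∀ j, v j = -((B'.mulVec c) j * α) := by
    intro j
    have h1 : (B' * B).mulVec v = v := by rw [hB', Matrix.one_mulVec]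
    have h2 : B'.mulVec (B.mulVec v) = v := by rwa [Matrix.mulVec_mulVec]
    have h3 : B'.mulVec (fun i => -(c i * α)) j = v j := by rw [← hBv, h2]
    rw [← h3]
    simp only [Matrix.mulVec, dotProduct, mul_neg, ← mul_assoc,
      Finset.sum_neg_distrib, ← Finset.sum_mul]
  -- key relation from the (last, last) entry of A * A' = 1
  have hkey : (d - dotProduct r (B'.mulVec c)) * α = 1 := by
    have h := congrFun (congrFun hA (Fin.last n)) (Fin.last n)
    rw [Matrix.mul_apply, Fin.sum_univ_castSucc, Matrix.one_apply_eq] at h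
    have h' : (∑ j : Fin n, r j * v j) + d * α = 1 := h
    have hsum : (∑ j : Fin n, r j * v j) = -(dotProduct r (B'.mulVec c) * α) := by
      rw [dotProduct, Finset.sum_mul, ← Finset.sum_neg_distrib]
      exact Finset.sum_congr rfl fun j _ => by rw [hveq j, mul_neg, mul_assoc]
    rw [hsum, neg_add_eq_sub] at h'
    rw [sub_mul]
    exact h'
  exact (inv_eq_of_mul_eq_one_left hkey).symm
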